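/- For the system ẋ = (x+1)(gx+1), ẏ = (g−1)xy + y² with g(g²−1) ≠ 0, the four affine lines y = 0, x + 1 = 0, x − y + 1 = 0, and gx + 1 = 0 are pairwise distinct invariant algebraic curves of the system. -/

import Mathlib

open MvPolynomial

/-- For `ẋ = (x+1)(gx+1), ẏ = (g−1)xy + y²` with `g(g²−1) ≠ 0`, the four
affine lines `y = 0`, `x + 1 = 0`, `x − y + 1 = 0`, `gx + 1 = 0` are pairwise distinct
(non-proportional) invariant algebraic curves. -/
theorem four_invariant_lines_V1 (g : ℝ) (hg : g * (g ^ 2 - 1) ≠ 0) :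
    let p : MvPolynomial (Fin 2) ℝ := (X 0 + 1) * (C g * X 0 + 1)
    let q : MvPolynomial (Fin 2) ℝ := C (g - 1) * X 0 * X 1 + X 1 ^ 2
    let f₁ : MvPolynomial (Fin 2) ℝ := X 1
    let f₂ : MvPolynomial (Fin 2) ℝ := X 0 + 1
    let f₃ : MvPolynomial (Fin 2) ℝ := X 0 - X 1 + 1
    let f₄ : MvPolynomial (Fin 2) ℝ := C g * X 0 + 1
    (f₁ ∣ p * pderiv 0 f₁ + q * pderiv 1 f₁) ∧
    (f₂ ∣ p * pderiv 0 f₂ + q * pderiv 1 f₂) ∧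
    (f₃ ∣ p * pderiv 0 f₃ + q * pderiv 1 f₃) ∧
    (f₄ ∣ p * pderiv 0 f₄ + q * pderiv 1 f₄) ∧
    (∀ c : ℝ, f₁ ≠ C c * f₂) ∧ (∀ c : ℝ, f₁ ≠ C c * f₃) ∧ (∀ c : ℝ, f₁ ≠ C c * f₄) ∧
    (∀ c : ℝ, f₂ ≠ C c * f₃) ∧ (∀ c : ℝ, f₂ ≠ C c * f₄) ∧ (∀ c : ℝ, f₃ ≠ C c * f₄) := by
  intro p q f₁ f₂ f₃ f₄
  have hg0 : g ≠ 0 := fun h => hg (by rw [h]; ring)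
  have hg1 : g ≠ 1 := fun h => hg (by rw [h]; ring)
  have d1 : pderiv (0 : Fin 2) f₁ = 0 := by simp [f₁]
  have d1' : pderiv (1 : Fin 2) f₁ = 1 := by simp [f₁]
  have d2 : pderiv (0 : Fin 2) f₂ = 1 := by simp [f₂]
  have d2' : pderiv (1 : Fin 2) f₂ = 0 := by simp [f₂]
  have d3 : pderiv (0 : Fin 2) f₃ = 1 := by simp [f₃]
  have d3' : pderiv (1 : Fin 2) f₃ = -1 := by simp [f₃]
  have d4 : pderiv (0 : Fin 2) f₄ = C g := by simp [f₄]
  have d4' : pderiv (1 : Fin 2) f₄ = 0 := by simp [f₄]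
  refine ⟨⟨C (g - 1) * X 0 + X 1, by rw [d1, d1']; simp only [p, q, f₁]; ring⟩,
    ⟨C g * X 0 + 1, by rw [d2, d2']; simp only [p, q, f₂]; ring⟩,
    ⟨C g * X 0 + X 1 + 1, by rw [d3, d3']; simp only [p, q, f₃, map_sub, map_one]; ring⟩,
    ⟨C g * X 0 + C g, by rw [d4, d4']; simp only [p, q, f₄]; ring⟩, ?_, ?_, ?_, ?_, ?_, ?_⟩
  · intro c h
    have := congrArg (eval ![-1, 1]) h
    simp [f₁, f₂] at this
  · intro c h
    have := congrArg (eval ![0, 1]) h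
    simp [f₁, f₃] at this
  · intro c h
    have := congrArg (eval ![-1/g, 1]) h
    simp [f₁, f₄] at this
    rw [show (g * (-1/g) + 1 : ℝ) = 0 from by field_simp; ring] at this
    simp at this
  · intro c h
    have := congrArg (eval ![0, 1]) h
    simp [f₂, f₃] at this
  · intro c h
    have := congrArg (eval ![-1/g, 0]) h
    simp only [f₂, f₄, map_add, map_mul, eval_X, eval_C, map_one, Matrix.cons_val_zero, Matrix.cons_val_one] at this
    field_simp at this
    exact hg1 (by linarith)
  · intro c h
    have := congrArg (eval ![-1/g, 0]) h
    simp only [f₃, f₄, map_add, map_sub, map_mul, eval_X, eval_C, map_one, Matrix.cons_val_zero, Matrix.cons_val_one] at this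
    field_simp at this
    exact hg1 (by linarith)
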